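/- With the notation of the context, suppose r1 ≥ 1 and n_{r1} = 0. Then for all x > 0, Ω^{(α)}[n_1,…,n_{r1}; m_1,…,m_{r2}; m'_1,…,m'_{r3}; n'_1,…,n'_{r4}](x) = (∏_{i=1}^{r3}(m'_i − α) · ∏_{i=1}^{r4}(n'_i + 1)) · Ω^{(α+1)}[n_1−1,…,n_{r1−1}−1; m_1,…,m_{r2}; m'_1,…,m'_{r3}; n'_1+1,…,n'_{r4}+1](x), where on the right-hand side the first sequence has r1−1 entries (the entry n_{r1} = 0 has been removed and every remaining entry decreased by 1). -/

import Mathlib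

open scoped BigOperators

/-- The Laguerre polynomial `L_n^{(α)}` as a function on `ℝ`; it is `0` for `n < 0`. -/
noncomputable def laguerre (α : ℝ) (n : ℤ) (x : ℝ) : ℝ :=
  if n < 0 then 0 else
    ∑ k ∈ Finset.range (n.toNat + 1),
      ((-1 : ℝ) ^ k / (Nat.factorial k : ℝ)) *
        ((∏ i ∈ Finset.Icc (k + 1) n.toNat, (α + (i : ℝ))) / (Nat.factorial (n.toNat - k) : ℝ)) *
        x ^ k

/-- The Wronskian `Wr[f_1, …, f_r](x) = det (f_i^{(j-1)}(x))`. -/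
noncomputable def Wr {r : ℕ} (f : Fin r → ℝ → ℝ) (x : ℝ) : ℝ :=
  Matrix.det (Matrix.of fun i j : Fin r => iteratedDeriv (j : ℕ) (f i) x)

/-- `Ω^{(α)}[n_1,…,n_{r1}; m_1,…,m_{r2}; m'_1,…,m'_{r3}; n'_1,…,n'_{r4}](x)
  = e^{−(r2+r4)x} x^{(α+r1+r2)(r3+r4)} Wr[f_1,…,f_r](x)` built out of the four types of
eigenfunctions of the Laguerre differential operator (0-indexed sequences `a, b, c, d`). -/
noncomputable def Omega4 (α : ℝ) (r1 r2 r3 r4 : ℕ) (a b c d : ℕ → ℕ) (x : ℝ) : ℝ :=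
  Real.exp (-((r2 : ℝ) + (r4 : ℝ)) * x) *
    x ^ ((α + (r1 : ℝ) + (r2 : ℝ)) * ((r3 : ℝ) + (r4 : ℝ))) *
    Wr (fun i : Fin (r1 + r2 + r3 + r4) => fun y =>
      if (i : ℕ) < r1 then laguerre α (a (i : ℕ)) y
      else if (i : ℕ) < r1 + r2 then Real.exp y * laguerre α (b ((i : ℕ) - r1)) (-y)
      else if (i : ℕ) < r1 + r2 + r3 then
        y ^ (-α) * laguerre (-α) (c ((i : ℕ) - r1 - r2)) y
      else Real.exp y * y ^ (-α) * laguerre (-α) (d ((i : ℕ) - r1 - r2 - r3)) (-y)) x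

noncomputable def lcoef (α : ℝ) (n k : ℕ) : ℝ :=
  (-1 : ℝ) ^ k / (Nat.factorial k : ℝ) *
    ((∏ i ∈ Finset.Icc (k + 1) n, (α + (i : ℝ))) / (Nat.factorial (n - k) : ℝ))

lemma laguerre_natCast (α : ℝ) (n : ℕ) :
    laguerre α (n : ℤ) = fun x => ∑ k ∈ Finset.range (n + 1), lcoef α n k * x ^ k := by
  funext x
  simp [laguerre, lcoef]

lemma laguerre_natCast' (α : ℝ) (n : ℕ) (x : ℝ) :
    laguerre α (n : ℤ) x = ∑ k ∈ Finset.range (n + 1), lcoef α n k * x ^ k := by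
  rw [laguerre_natCast]

lemma laguerre_zero' (α : ℝ) : laguerre α 0 = fun _ => (1 : ℝ) := by
  funext x
  simp [laguerre]

lemma laguerre_of_neg (α : ℝ) {n : ℤ} (h : n < 0) : laguerre α n = fun _ => (0 : ℝ) := by
  funext x
  simp [laguerre, h]

lemma prod_shift (α : ℝ) (a b : ℕ) :
    (∏ i ∈ Finset.Icc (a + 1) (b + 1), (α + (i : ℝ))) =
      ∏ i ∈ Finset.Icc a b, (α + 1 + (i : ℝ)) := by
  rw [← Finset.map_add_right_Icc a b 1, Finset.prod_map]
  refine Finset.prod_congr rfl fun i _ => ?_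
  simp [addRightEmbedding]
  push_cast
  ring

lemma prod_Icc_bot {a b : ℕ} (h : a ≤ b) (f : ℕ → ℝ) :
    ∏ i ∈ Finset.Icc a b, f i = f a * ∏ i ∈ Finset.Icc (a + 1) b, f i := by
  rw [← Finset.Ico_add_one_right_eq_Icc, Finset.prod_eq_prod_Ico_succ_bot (b := b + 1) (Nat.lt_succ_of_le h),
    Finset.Ico_add_one_right_eq_Icc]


lemma key2 (α : ℝ) {k n : ℕ} (hk : k ≤ n) :
    lcoef α (n + 1) (k + 1) * ((k : ℝ) + 1) = - lcoef (α + 1) n k := by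
  unfold lcoef
  rw [show n + 1 - (k + 1) = n - k from by omega, prod_shift α (k + 1) n, Nat.factorial_succ]
  have h1 : ((k.factorial : ℝ)) ≠ 0 := Nat.cast_ne_zero.mpr k.factorial_ne_zero
  have h2 : (((n - k).factorial : ℝ)) ≠ 0 := Nat.cast_ne_zero.mpr (n - k).factorial_ne_zero
  field_simp
  push_cast
  ring

lemma key1 (β : ℝ) {k n : ℕ} (hk : k ≤ n) :
    (β + (k : ℝ)) * lcoef β n k = ((n : ℝ) + β) * lcoef (β - 1) n k := by
  have hP : (β + (k : ℝ)) * ∏ i ∈ Finset.Icc (k + 1) n, (β + (i : ℝ)) =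
      ((n : ℝ) + β) * ∏ i ∈ Finset.Icc (k + 1) n, (β - 1 + (i : ℝ)) := by
    rcases eq_or_lt_of_le hk with rfl | hlt
    · rw [Finset.Icc_eq_empty (by omega), Finset.prod_empty, Finset.prod_empty]; ring
    · obtain ⟨m, rfl⟩ : ∃ m, n = m + 1 := ⟨n - 1, by omega⟩
      have hkm : k ≤ m := by omega
      rw [← prod_Icc_bot hk (fun i => β + (i : ℝ)), prod_shift (β - 1) k m]
      simp only [show β - 1 + 1 = β from by ring]
      rw [Finset.prod_Icc_succ_top (by omega : k ≤ m + 1) (fun i => β + (i : ℝ))]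
      push_cast
      ring
  unfold lcoef
  linear_combination ((-1 : ℝ)) ^ k / (k.factorial : ℝ) / ((n - k).factorial : ℝ) * hP


lemma key3 (α : ℝ) {k n : ℕ} (hk : k ≤ n) :
    lcoef (α + 1) (n + 1) k = lcoef α (n + 1) k + lcoef (α + 1) n k := by
  have hP : (∏ i ∈ Finset.Icc (k + 1) (n + 1), (α + 1 + (i : ℝ))) =
      (∏ i ∈ Finset.Icc (k + 1) (n + 1), (α + (i : ℝ))) +
        ((n : ℝ) - (k : ℝ) + 1) * ∏ i ∈ Finset.Icc (k + 1) n, (α + 1 + (i : ℝ)) := by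
    rw [Finset.prod_Icc_succ_top (by omega : k + 1 ≤ n + 1) (fun i => α + 1 + (i : ℝ)),
      prod_Icc_bot (by omega : k + 1 ≤ n + 1) (fun i => α + (i : ℝ)),
      prod_shift α (k + 1) n]
    push_cast
    ring
  unfold lcoef
  rw [hP, show n + 1 - k = (n - k) + 1 from by omega, Nat.factorial_succ]
  have h1 : ((k.factorial : ℝ)) ≠ 0 := Nat.cast_ne_zero.mpr k.factorial_ne_zero
  have h2 : (((n - k).factorial : ℝ)) ≠ 0 := Nat.cast_ne_zero.mpr (n - k).factorial_ne_zero
  have h3 : ((n : ℝ) - (k : ℝ) + 1) ≠ 0 := by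
    have : (k : ℝ) ≤ (n : ℝ) := Nat.cast_le.mpr hk
    nlinarith
  push_cast [Nat.cast_sub hk]
  field_simp

lemma key4 (β : ℝ) {k n : ℕ} (hk : k ≤ n + 1) :
    (if k ≤ n then (β + (k : ℝ)) * lcoef β n k else 0) -
        (if 1 ≤ k then lcoef β n (k - 1) else 0) =
      ((n : ℝ) + 1) * lcoef (β - 1) (n + 1) k := by
  rcases Nat.eq_zero_or_pos k with rfl | hk1
  · simp only [Nat.zero_le, if_true, Nat.cast_zero, add_zero, Nat.lt_irrefl, if_neg (by omega : ¬ 1 ≤ 0), sub_zero]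
    have hP : (∏ i ∈ Finset.Icc 1 (n + 1), (β - 1 + (i : ℝ))) =
        β * ∏ i ∈ Finset.Icc 1 n, (β + (i : ℝ)) := by
      rw [show (1 : ℕ) = 0 + 1 from rfl, prod_shift (β - 1) 0 n]
      simp only [show β - 1 + 1 = β from by ring]
      rw [prod_Icc_bot (Nat.zero_le n) (fun i => β + (i : ℝ))]
      norm_num
    unfold lcoef
    simp only [Nat.sub_zero, zero_add, pow_zero, Nat.factorial_zero]
    rw [hP, Nat.factorial_succ]
    have h2 : ((n.factorial : ℝ)) ≠ 0 := Nat.cast_ne_zero.mpr n.factorial_ne_zero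
    push_cast
    field_simp
  · rcases eq_or_lt_of_le hk with rfl | hklt
    · -- k = n + 1
      simp only [if_neg (by omega : ¬ n + 1 ≤ n), if_pos (by omega : 1 ≤ n + 1), zero_sub,
        Nat.add_sub_cancel]
      unfold lcoef
      rw [Finset.Icc_eq_empty (by omega : ¬ n + 1 ≤ n), Finset.Icc_eq_empty (by omega : ¬ n + 1 + 1 ≤ n + 1)]
      simp only [Finset.prod_empty, Nat.sub_self, Nat.factorial_zero, Nat.factorial_succ]
      have h2 : ((n.factorial : ℝ)) ≠ 0 := Nat.cast_ne_zero.mpr n.factorial_ne_zero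
      push_cast
      field_simp
      ring
    · -- 1 ≤ k ≤ n
      obtain ⟨j, rfl⟩ : ∃ j, k = j + 1 := ⟨k - 1, by omega⟩
      have hjn : j + 1 ≤ n := by omega
      simp only [if_pos hjn, if_pos (by omega : 1 ≤ j + 1), Nat.add_sub_cancel]
      have e1 : (∏ i ∈ Finset.Icc (j + 1) n, (β + (i : ℝ))) =
          (β + ((j : ℝ) + 1)) * ∏ i ∈ Finset.Icc (j + 1 + 1) n, (β + (i : ℝ)) := by
        rw [prod_Icc_bot hjn (fun i => β + (i : ℝ))]
        push_cast
        ring_nf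
      have e2 : (∏ i ∈ Finset.Icc (j + 1 + 1) (n + 1), (β - 1 + (i : ℝ))) =
          (β + ((j : ℝ) + 1)) * ∏ i ∈ Finset.Icc (j + 1 + 1) n, (β + (i : ℝ)) := by
        rw [prod_shift (β - 1) (j + 1) n]
        simp only [show β - 1 + 1 = β from by ring]
        rw [prod_Icc_bot hjn (fun i => β + (i : ℝ))]
        push_cast
        ring_nf
      unfold lcoef
      rw [e1, e2, show n + 1 - (j + 1) = n - j from by omega,
        show n - (j + 1) = (n - j) - 1 from by omega,
        show n - j = ((n - j) - 1) + 1 from by omega]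
      simp only [Nat.add_sub_cancel]
      rw [Nat.factorial_succ (n - j - 1), Nat.factorial_succ j]
      have h1 : ((j.factorial : ℝ)) ≠ 0 := Nat.cast_ne_zero.mpr j.factorial_ne_zero
      have h2 : (((n - j - 1).factorial : ℝ)) ≠ 0 := Nat.cast_ne_zero.mpr (n - j - 1).factorial_ne_zero
      push_cast [Nat.cast_sub (by omega : 1 ≤ n - j), Nat.cast_sub (by omega : j ≤ n)]
      have h3 : (n : ℝ) - (j : ℝ) ≠ 0 := by
        have : ((j : ℝ)) + 1 ≤ (n : ℝ) := by exact_mod_cast Nat.cast_le.mpr hjn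
        nlinarith
      have h4 : ((j : ℝ)) + 1 ≠ 0 := by positivity
      simp only [sub_add_cancel]
      field_simp
      ring


-- ### sum-level identities
lemma identity_I1 (α y : ℝ) {m : ℤ} (hm : 0 ≤ m) :
    laguerre (α + 1) m y = laguerre α m y + laguerre (α + 1) (m - 1) y := by
  lift m to ℕ using hm
  cases m with
  | zero =>
    simp only [Nat.cast_zero, laguerre_zero']
    rw [show (0 : ℤ) - 1 = -1 from rfl, laguerre_of_neg _ (by norm_num)]
    norm_num
  | succ n =>
    rw [show ((n + 1 : ℕ) : ℤ) - 1 = ((n : ℕ) : ℤ) from by push_cast; ring,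
      laguerre_natCast', laguerre_natCast', laguerre_natCast']
    have htop : lcoef (α + 1) (n + 1) (n + 1) = lcoef α (n + 1) (n + 1) := by
      unfold lcoef
      rw [Finset.Icc_eq_empty (by omega : ¬ n + 1 + 1 ≤ n + 1)]
      simp
    rw [Finset.sum_range_succ, Finset.sum_range_succ
      (f := fun k => lcoef α (n + 1) k * y ^ k), htop]
    have hmain : ∑ k ∈ Finset.range (n + 1), lcoef (α + 1) (n + 1) k * y ^ k =
        ∑ k ∈ Finset.range (n + 1), lcoef α (n + 1) k * y ^ k +
          ∑ k ∈ Finset.range (n + 1), lcoef (α + 1) n k * y ^ k := by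
      rw [← Finset.sum_add_distrib]
      refine Finset.sum_congr rfl fun k hk => ?_
      have hk' : k ≤ n := by have := Finset.mem_range.mp hk; omega
      rw [key3 α hk']; ring
    rw [hmain]; ring

-- derivative of Laguerre
lemma hasDerivAt_laguerre (α : ℝ) (n : ℤ) (x : ℝ) :
    HasDerivAt (laguerre α n) (-(laguerre (α + 1) (n - 1) x)) x := by
  rcases lt_trichotomy n 0 with hn | rfl | hn
  · rw [laguerre_of_neg α hn, laguerre_of_neg (α + 1) (by omega : n - 1 < 0)]
    simpa using hasDerivAt_const x (0 : ℝ)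
  · rw [laguerre_zero', laguerre_of_neg (α + 1) (by norm_num : (0 : ℤ) - 1 < 0)]
    simpa using hasDerivAt_const x (1 : ℝ)
  · obtain ⟨m, rfl⟩ : ∃ m : ℕ, n = ((m + 1 : ℕ) : ℤ) := by
      refine ⟨(n - 1).toNat, by omega⟩
    rw [laguerre_natCast, show ((m + 1 : ℕ) : ℤ) - 1 = ((m : ℕ) : ℤ) from by push_cast; ring,
      laguerre_natCast]
    have h : HasDerivAt (fun y : ℝ => ∑ k ∈ Finset.range (m + 1 + 1), lcoef α (m + 1) k * y ^ k)
        (∑ k ∈ Finset.range (m + 1 + 1), lcoef α (m + 1) k * ((k : ℝ) * x ^ (k - 1))) x :=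
      HasDerivAt.fun_sum fun k _ => (hasDerivAt_pow k x).const_mul _
    convert h using 1
    rw [Finset.sum_range_succ']
    simp only [Nat.cast_zero, zero_mul, mul_zero, add_zero, Nat.add_sub_cancel]
    rw [← Finset.sum_neg_distrib]
    refine Finset.sum_congr rfl fun k hk => ?_
    have hk' : k ≤ m := by have := Finset.mem_range.mp hk; omega
    have := key2 α hk'
    push_cast at this ⊢
    linear_combination (-(x ^ k)) * this

lemma identity_I2 (β y : ℝ) (n : ℕ) :
    β * laguerre β (n : ℤ) y - y * laguerre (β + 1) ((n : ℤ) - 1) y =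
      ((n : ℝ) + β) * laguerre (β - 1) (n : ℤ) y := by
  cases n with
  | zero =>
    simp only [Nat.cast_zero, laguerre_zero']
    rw [show (0 : ℤ) - 1 = -1 from rfl, laguerre_of_neg _ (by norm_num)]
    norm_num
  | succ m =>
    rw [show ((m + 1 : ℕ) : ℤ) - 1 = ((m : ℕ) : ℤ) from by push_cast; ring,
      laguerre_natCast', laguerre_natCast', laguerre_natCast']
    have h2 : y * ∑ k ∈ Finset.range (m + 1), lcoef (β + 1) m k * y ^ k =
        - ∑ k ∈ Finset.range (m + 1 + 1), (k : ℝ) * (lcoef β (m + 1) k * y ^ k) := by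
      rw [Finset.sum_range_succ' (f := fun k => (k : ℝ) * (lcoef β (m + 1) k * y ^ k))]
      simp only [Nat.cast_zero, zero_mul, add_zero]
      rw [Finset.mul_sum, ← Finset.sum_neg_distrib]
      refine Finset.sum_congr rfl fun k hk => ?_
      have hk' : k ≤ m := by have := Finset.mem_range.mp hk; omega
      have := key2 β hk'
      push_cast at this ⊢
      linear_combination (y ^ (k + 1)) * this
    rw [h2]
    have h3 : β * ∑ k ∈ Finset.range (m + 1 + 1), lcoef β (m + 1) k * y ^ k
        - - ∑ k ∈ Finset.range (m + 1 + 1), (k : ℝ) * (lcoef β (m + 1) k * y ^ k) =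
        ∑ k ∈ Finset.range (m + 1 + 1), ((β + (k : ℝ)) * lcoef β (m + 1) k) * y ^ k := by
      rw [sub_neg_eq_add, Finset.mul_sum, ← Finset.sum_add_distrib]
      exact Finset.sum_congr rfl fun k _ => by ring
    rw [h3, Finset.mul_sum]
    refine Finset.sum_congr rfl fun k hk => ?_
    have hk' : k ≤ m + 1 := by have := Finset.mem_range.mp hk; omega
    rw [key1 β hk']
    push_cast
    ring

lemma identity_I4 (β y : ℝ) (n : ℕ) :
    ((n : ℝ) + β) * laguerre (β - 1) (n : ℤ) y - y * laguerre β (n : ℤ) y =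
      ((n : ℝ) + 1) * laguerre (β - 1) ((n : ℤ) + 1) y := by
  rw [show ((n : ℤ) + 1) = ((n + 1 : ℕ) : ℤ) from by push_cast; ring,
    laguerre_natCast', laguerre_natCast', laguerre_natCast']
  have hA : ((n : ℝ) + β) * ∑ k ∈ Finset.range (n + 1), lcoef (β - 1) n k * y ^ k =
      ∑ k ∈ Finset.range (n + 1 + 1),
        (if k ≤ n then (β + (k : ℝ)) * lcoef β n k else 0) * y ^ k := by
    conv_rhs => rw [Finset.sum_range_succ]
    rw [if_neg (by omega : ¬ n + 1 ≤ n), zero_mul, add_zero, Finset.mul_sum]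
    refine Finset.sum_congr rfl fun k hk => ?_
    have hk' : k ≤ n := by have := Finset.mem_range.mp hk; omega
    rw [if_pos hk', key1 β hk']
    ring
  have hB : y * ∑ k ∈ Finset.range (n + 1), lcoef β n k * y ^ k =
      ∑ k ∈ Finset.range (n + 1 + 1),
        (if 1 ≤ k then lcoef β n (k - 1) else 0) * y ^ k := by
    rw [Finset.sum_range_succ' (f := fun k => (if 1 ≤ k then lcoef β n (k - 1) else 0) * y ^ k)]
    rw [if_neg (by omega : ¬ (1 : ℕ) ≤ 0), zero_mul, add_zero, Finset.mul_sum]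
    refine (Finset.sum_congr rfl fun k _ => ?_).symm
    rw [if_pos (by omega : 1 ≤ k + 1), Nat.add_sub_cancel]
    ring
  rw [hA, hB, ← Finset.sum_sub_distrib, Finset.mul_sum]
  refine Finset.sum_congr rfl fun k hk => ?_
  have hk' : k ≤ n + 1 := by have := Finset.mem_range.mp hk; omega
  rw [← sub_mul, key4 β hk']
  ring


-- chain rule for y ↦ f (-y)
lemma hasDerivAt_comp_neg {f : ℝ → ℝ} {d x : ℝ} (hf : HasDerivAt f d (-x)) :
    HasDerivAt (fun y => f (-y)) (-d) x := by
  have h := hf.comp x (hasDerivAt_neg x)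
  simp only [mul_neg, mul_one] at h
  exact h

lemma hasDerivAt_type2 (α : ℝ) (m : ℕ) (x : ℝ) :
    HasDerivAt (fun y => Real.exp y * laguerre α (m : ℤ) (-y))
      (Real.exp x * laguerre (α + 1) (m : ℤ) (-x)) x := by
  have h1 : HasDerivAt (fun y => laguerre α (m : ℤ) (-y))
      (laguerre (α + 1) ((m : ℤ) - 1) (-x)) x := by
    simpa using hasDerivAt_comp_neg (hasDerivAt_laguerre α (m : ℤ) (-x))
  have h := (Real.hasDerivAt_exp x).mul h1
  refine h.congr_deriv ?_
  rw [identity_I1 α (-x) (by positivity : (0:ℤ) ≤ (m:ℤ))]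
  ring

lemma hasDerivAt_type3 (α : ℝ) (n : ℕ) {x : ℝ} (hx : 0 < x) :
    HasDerivAt (fun y => y ^ (-α) * laguerre (-α) (n : ℤ) y)
      (((n : ℝ) - α) * (x ^ (-(α + 1)) * laguerre (-(α + 1)) (n : ℤ) x)) x := by
  have h1 : HasDerivAt (fun y : ℝ => y ^ (-α)) (-α * x ^ (-α - 1)) x :=
    Real.hasDerivAt_rpow_const (Or.inl hx.ne')
  have h2 := hasDerivAt_laguerre (-α) (n : ℤ) x
  have h := h1.mul h2
  refine h.congr_deriv ?_
  have hI := identity_I2 (-α) x n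
  have hxz : x ^ (-α) = x ^ (-α - 1) * x := by
    rw [← Real.rpow_add_one hx.ne' (-α - 1)]
    ring_nf
  have hba : -(α + 1) = -α - 1 := by ring
  rw [hba, hxz]
  have h2' : -α - 1 = -α - 1 := rfl
  -- goal: ((n:ℝ) - α) * (x^(-α-1) * laguerre (-α-1) n x) = -α*x^(-α-1) * L + x^(-α-1)*x * (-(laguerre (-α+1) (n-1) x))
  linear_combination (x ^ (-α - 1)) * hI

lemma hasDerivAt_type4 (α : ℝ) (n : ℕ) {x : ℝ} (hx : 0 < x) :
    HasDerivAt (fun y => Real.exp y * y ^ (-α) * laguerre (-α) (n : ℤ) (-y))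
      (((n : ℝ) + 1) * (Real.exp x * x ^ (-(α + 1)) * laguerre (-(α + 1)) ((n : ℤ) + 1) (-x))) x := by
  have h1 : HasDerivAt (fun y : ℝ => Real.exp y * y ^ (-α))
      (Real.exp x * x ^ (-α) + Real.exp x * (-α * x ^ (-α - 1))) x :=
    (Real.hasDerivAt_exp x).mul (Real.hasDerivAt_rpow_const (Or.inl hx.ne'))
  have h2 : HasDerivAt (fun y => laguerre (-α) (n : ℤ) (-y))
      (laguerre (-α + 1) ((n : ℤ) - 1) (-x)) x := by
    simpa using hasDerivAt_comp_neg (hasDerivAt_laguerre (-α) (n : ℤ) (-x))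
  have h := h1.mul h2
  refine h.congr_deriv ?_
  have hI2 := identity_I2 (-α) (-x) n
  have hI4 := identity_I4 (-α) (-x) n
  have hxz : x ^ (-α) = x ^ (-α - 1) * x := by
    rw [← Real.rpow_add_one hx.ne' (-α - 1)]; ring_nf
  rw [show -(α + 1) = -α - 1 from by ring, hxz]
  linear_combination (Real.exp x * x ^ (-α - 1)) * hI4 + (Real.exp x * x ^ (-α - 1)) * hI2

lemma iteratedDeriv_congr_nhds {f g : ℝ → ℝ} {x : ℝ} (h : f =ᶠ[nhds x] g) (n : ℕ) :
    iteratedDeriv n f x = iteratedDeriv n g x := by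
  induction n generalizing f g with
  | zero => simpa using h.eq_of_nhds
  | succ n ih => rw [iteratedDeriv_succ', iteratedDeriv_succ']; exact ih h.deriv

lemma iteratedDeriv_const_mul'' (n : ℕ) (c : ℝ) (f : ℝ → ℝ) :
    iteratedDeriv n (fun y => c * f y) = fun x => c * iteratedDeriv n f x := by
  induction n generalizing f with
  | zero => simp
  | succ n ih =>
    rw [iteratedDeriv_succ', deriv_const_mul_field' c, ih (deriv f)]
    funext z
    rw [iteratedDeriv_succ']

lemma iteratedDeriv_const' (n : ℕ) (c : ℝ) :
    iteratedDeriv n (fun _ : ℝ => c) = fun _ => if n = 0 then c else 0 := by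
  induction n generalizing c with
  | zero => simp
  | succ n ih =>
    rw [iteratedDeriv_succ', show deriv (fun _ : ℝ => c) = fun _ : ℝ => (0 : ℝ) from
      funext fun z => deriv_const z c, ih 0]
    simp


lemma wr_step {r' : ℕ} (F : Fin (r' + 1) → ℝ → ℝ) (G : Fin r' → ℝ → ℝ) (e : Fin r' → ℝ)
    (p : Fin (r' + 1)) (x : ℝ) (hFp : F p = fun _ => 1)
    (hFG : ∀ i : Fin r', ∀ j : ℕ,
      iteratedDeriv j (deriv (F (p.succAbove i))) x = e i * iteratedDeriv j (G i) x) :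
    Wr F x = ((-1 : ℝ) ^ (p : ℕ) * ∏ i, e i) * Wr G x := by
  classical
  set M : Matrix (Fin (r' + 1)) (Fin (r' + 1)) ℝ :=
    Matrix.of fun i j : Fin (r' + 1) => iteratedDeriv (j : ℕ) (F i) x with hM
  set σ : Equiv.Perm (Fin (r' + 1)) := (Fin.cycleRange p)⁻¹ with hσ
  have hperm := Matrix.det_permute σ M
  have hsign : ((Equiv.Perm.sign σ : ℤ) : ℝ) = (-1 : ℝ) ^ (p : ℕ) := by
    rw [hσ, Equiv.Perm.sign_inv, Fin.sign_cycleRange]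
    push_cast
    ring
  -- N = row-permuted matrix
  set N : Matrix (Fin (r' + 1)) (Fin (r' + 1)) ℝ := M.submatrix σ id with hN
  have hone : (-1 : ℝ) ^ (p : ℕ) * (-1 : ℝ) ^ (p : ℕ) = 1 := by
    rw [← pow_add, show (p : ℕ) + (p : ℕ) = 2 * (p : ℕ) from by ring, pow_mul]
    norm_num
  have hMN : M.det = (-1 : ℝ) ^ (p : ℕ) * N.det := by
    rw [hperm, hsign, ← mul_assoc, hone, one_mul]
  -- expand det N along row 0
  have hσ0 : σ 0 = p := by
    rw [hσ, Equiv.Perm.inv_eq_iff_eq, Fin.cycleRange_self]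
  have hσs : ∀ i : Fin r', σ i.succ = p.succAbove i := by
    intro i
    rw [hσ, Equiv.Perm.inv_eq_iff_eq, Fin.cycleRange_succAbove]
  have hrow0 : ∀ j : Fin (r' + 1), N 0 j = if (j : ℕ) = 0 then 1 else 0 := by
    intro j
    show M (σ 0) j = _
    rw [hσ0]
    show iteratedDeriv (j : ℕ) (F p) x = _
    rw [hFp, iteratedDeriv_const' (j : ℕ) 1]
  have hdetN : N.det = (N.submatrix Fin.succ Fin.succ).det := by
    rw [Matrix.det_succ_row_zero N]
    rw [Finset.sum_eq_single (0 : Fin (r' + 1))]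
    · rw [hrow0 0]
      simp [Fin.succAbove_zero]
    · intro j _ hj
      rw [hrow0 j]
      have : (j : ℕ) ≠ 0 := fun h => hj (Fin.ext h)
      simp [this]
    · intro h
      exact absurd (Finset.mem_univ _) h
  have hQ : (N.submatrix Fin.succ Fin.succ) =
      Matrix.of fun i j : Fin r' => e i * iteratedDeriv (j : ℕ) (G i) x := by
    ext i j
    show M (σ i.succ) j.succ = _
    rw [hσs i]
    show iteratedDeriv ((j : ℕ) + 1) (F (p.succAbove i)) x = _
    rw [iteratedDeriv_succ', hFG i (j : ℕ)]
    rfl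
  have hdetQ : (N.submatrix Fin.succ Fin.succ).det = (∏ i, e i) * Wr G x := by
    rw [hQ]
    exact Matrix.det_mul_column e _
  show M.det = _
  rw [hMN, hdetN, hdetQ]
  ring


lemma Wr_cast {r₁ r₂ : ℕ} (h : r₁ = r₂) (f : Fin r₁ → ℝ → ℝ) (x : ℝ) :
    Wr f x = Wr (fun i : Fin r₂ => f (Fin.cast h.symm i)) x := by
  subst h; rfl

lemma succAbove_val {r : ℕ} (p : Fin (r + 1)) (i : Fin r) :
    ((p.succAbove i : Fin (r + 1)) : ℕ) = if (i : ℕ) < (p : ℕ) then (i : ℕ) else (i : ℕ) + 1 := by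
  rcases lt_or_ge ((i : ℕ)) ((p : ℕ)) with h | h
  · rw [if_pos h, Fin.succAbove_of_castSucc_lt _ _ (by rwa [Fin.lt_def])]
    rfl
  · rw [if_neg (not_lt.mpr h), Fin.succAbove_of_le_castSucc _ _ (by rwa [Fin.le_def])]
    rfl


/-- **Reduction when `n_{r1} = 0`.** If the first sequence ends in `0`, then for `x > 0`,
`Ω^{(α)}[n; m; m'; n'](x) = (∏ᵢ(m'_i − α) ∏ᵢ(n'_i + 1)) ·
Ω^{(α+1)}[n_1−1,…,n_{r1−1}−1; m; m'; n'_1+1,…,n'_{r4}+1](x)`. -/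
theorem omega4_reduction_first (α : ℝ) (r1 r2 r3 r4 : ℕ) (a b c d : ℕ → ℕ)
    (ha : ∀ i j, i < j → j < r1 → a j < a i)
    (hb : ∀ i j, i < j → j < r2 → b j < b i)
    (hc : ∀ i j, i < j → j < r3 → c j < c i)
    (hd : ∀ i j, i < j → j < r4 → d j < d i)
    (hr1 : 0 < r1) (ha0 : a (r1 - 1) = 0) :
    ∀ x : ℝ, 0 < x →
      Omega4 α r1 r2 r3 r4 a b c d x =
        ((∏ i ∈ Finset.range r3, ((c i : ℝ) - α)) *
            (∏ i ∈ Finset.range r4, ((d i : ℝ) + 1))) *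
          Omega4 (α + 1) (r1 - 1) r2 r3 r4 (fun i => a i - 1) b c (fun i => d i + 1) x := by
  intro x hx
  obtain ⟨s, rfl⟩ : ∃ s, r1 = s + 1 := ⟨r1 - 1, by omega⟩
  simp only [Nat.add_sub_cancel] at ha0
  simp only [Nat.add_sub_cancel]
  rw [Omega4, Omega4]
  have hlen : (s + 1) + r2 + r3 + r4 = (s + r2 + r3 + r4) + 1 := by omega
  set r'' := s + r2 + r3 + r4 with hr''
  set G : Fin r'' → ℝ → ℝ := fun i => fun y =>
      if (i : ℕ) < s then laguerre (α + 1) ((a (i : ℕ) - 1 : ℕ) : ℤ) y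
      else if (i : ℕ) < s + r2 then Real.exp y * laguerre (α + 1) ((b ((i : ℕ) - s) : ℕ) : ℤ) (-y)
      else if (i : ℕ) < s + r2 + r3 then
        y ^ (-(α + 1)) * laguerre (-(α + 1)) ((c ((i : ℕ) - s - r2) : ℕ) : ℤ) y
      else Real.exp y * y ^ (-(α + 1)) *
        laguerre (-(α + 1)) ((d ((i : ℕ) - s - r2 - r3) + 1 : ℕ) : ℤ) (-y) with hG
  set F : Fin ((s + 1) + r2 + r3 + r4) → ℝ → ℝ := fun i => fun y =>
      if (i : ℕ) < s + 1 then laguerre α ((a (i : ℕ) : ℕ) : ℤ) y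
      else if (i : ℕ) < s + 1 + r2 then Real.exp y * laguerre α ((b ((i : ℕ) - (s + 1)) : ℕ) : ℤ) (-y)
      else if (i : ℕ) < s + 1 + r2 + r3 then
        y ^ (-α) * laguerre (-α) ((c ((i : ℕ) - (s + 1) - r2) : ℕ) : ℤ) y
      else Real.exp y * y ^ (-α) *
        laguerre (-α) ((d ((i : ℕ) - (s + 1) - r2 - r3) : ℕ) : ℤ) (-y) with hF
  have ha0' : a s = 0 := ha0
  have key : Wr F x =
      (((∏ i ∈ Finset.range r3, ((c i : ℝ) - α)) *
        (∏ i ∈ Finset.range r4, ((d i : ℝ) + 1)))) * Wr G x := by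
    set ef : ℕ → ℝ := fun v =>
      if v < s then -1
      else if v < s + r2 then 1
      else if v < s + r2 + r3 then (c (v - s - r2) : ℝ) - α
      else (d (v - s - r2 - r3) : ℝ) + 1 with hef
    set p : Fin (r'' + 1) := ⟨s, by omega⟩ with hp
    have hps : (p : ℕ) = s := rfl
    rw [Wr_cast hlen F x]
    have hFp : (fun i : Fin (r'' + 1) => F (Fin.cast hlen.symm i)) p = fun _ => 1 := by
      funext y
      show F (Fin.cast hlen.symm p) y = 1
      simp only [hF, Fin.coe_cast, hps]
      rw [if_pos (by omega : s < s + 1), ha0', Nat.cast_zero, laguerre_zero']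
    have hFG : ∀ i : Fin r'', ∀ j : ℕ,
        iteratedDeriv j (deriv ((fun i : Fin (r'' + 1) => F (Fin.cast hlen.symm i))
          (p.succAbove i))) x = (fun i : Fin r'' => ef (i : ℕ)) i * iteratedDeriv j (G i) x := by
      intro i j
      show iteratedDeriv j (deriv (F (Fin.cast hlen.symm (p.succAbove i)))) x
        = ef (i : ℕ) * iteratedDeriv j (G i) x
      have hi4 : (i : ℕ) < s + r2 + r3 + r4 := i.isLt
      set q : Fin ((s + 1) + r2 + r3 + r4) := Fin.cast hlen.symm (p.succAbove i) with hq
      have hqv : (q : ℕ) = if (i : ℕ) < s then (i : ℕ) else (i : ℕ) + 1 := by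
        rw [hq, Fin.coe_cast, succAbove_val p i, hps]
      rcases lt_or_ge ((i : ℕ)) s with h1 | h1
      · -- type 1
        have hqi : (q : ℕ) = (i : ℕ) := by rw [hqv, if_pos h1]
        have h1a : 1 ≤ a (i : ℕ) := by
          have := ha (i : ℕ) s (by omega) (by omega); omega
        have hrow : F q = laguerre α ((a (i : ℕ) : ℕ) : ℤ) := by
          funext y
          simp only [hF, hqi]
          rw [if_pos (by omega : (i : ℕ) < s + 1)]
        have hGrow : G i = laguerre (α + 1) ((a (i : ℕ) - 1 : ℕ) : ℤ) := by
          funext y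
          simp only [hG]
          rw [if_pos h1]
        have hder : deriv (F q) =
            fun y => (-1 : ℝ) * laguerre (α + 1) ((a (i : ℕ) - 1 : ℕ) : ℤ) y := by
          funext y
          rw [hrow, (hasDerivAt_laguerre α _ y).deriv,
            show ((a (i : ℕ) : ℕ) : ℤ) - 1 = ((a (i : ℕ) - 1 : ℕ) : ℤ) from by omega]
          ring
        rw [hder, iteratedDeriv_const_mul'', hGrow]
        have hei : ef (i : ℕ) = -1 := by simp only [hef]; rw [if_pos h1]
        rw [hei]
      · have hqi : (q : ℕ) = (i : ℕ) + 1 := by rw [hqv, if_neg (not_lt.mpr h1)]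
        rcases lt_or_ge ((i : ℕ)) (s + r2) with h2 | h2
        · -- type 2
          have hrow : F q = fun y => Real.exp y * laguerre α ((b ((i : ℕ) - s) : ℕ) : ℤ) (-y) := by
            funext y
            simp only [hF, hqi]
            rw [if_neg (by omega), if_pos (by omega : (i : ℕ) + 1 < s + 1 + r2),
              show (i : ℕ) + 1 - (s + 1) = (i : ℕ) - s from by omega]
          have hGrow : G i = fun y =>
              Real.exp y * laguerre (α + 1) ((b ((i : ℕ) - s) : ℕ) : ℤ) (-y) := by
            funext y
            simp only [hG]
            rw [if_neg (not_lt.mpr h1), if_pos h2]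
          have hder : deriv (F q) = fun y =>
              (1 : ℝ) * (Real.exp y * laguerre (α + 1) ((b ((i : ℕ) - s) : ℕ) : ℤ) (-y)) := by
            funext y
            rw [hrow, (hasDerivAt_type2 α _ y).deriv]
            ring
          rw [hder, iteratedDeriv_const_mul'', hGrow]
          have hei : ef (i : ℕ) = 1 := by
            simp only [hef]
            rw [if_neg (not_lt.mpr h1), if_pos h2]
          rw [hei]
        · rcases lt_or_ge ((i : ℕ)) (s + r2 + r3) with h3 | h3
          · -- type 3
            have hrow : F q = fun y =>
                y ^ (-α) * laguerre (-α) ((c ((i : ℕ) - s - r2) : ℕ) : ℤ) y := by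
              funext y
              simp only [hF, hqi]
              rw [if_neg (by omega), if_neg (by omega),
                if_pos (by omega : (i : ℕ) + 1 < s + 1 + r2 + r3),
                show (i : ℕ) + 1 - (s + 1) - r2 = (i : ℕ) - s - r2 from by omega]
            have hGrow : G i = fun y =>
                y ^ (-(α + 1)) * laguerre (-(α + 1)) ((c ((i : ℕ) - s - r2) : ℕ) : ℤ) y := by
              funext y
              simp only [hG]
              rw [if_neg (by omega), if_neg (by omega), if_pos h3]
            have heq : deriv (F q) =ᶠ[nhds x] fun y =>
                ((c ((i : ℕ) - s - r2) : ℝ) - α) *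
                  (y ^ (-(α + 1)) * laguerre (-(α + 1)) ((c ((i : ℕ) - s - r2) : ℕ) : ℤ) y) := by
              rw [hrow]
              filter_upwards [isOpen_Ioi.mem_nhds hx] with y hy
              rw [(hasDerivAt_type3 α _ hy).deriv]
            rw [iteratedDeriv_congr_nhds heq j, iteratedDeriv_const_mul'', hGrow]
            have hei : ef (i : ℕ) = (c ((i : ℕ) - s - r2) : ℝ) - α := by
              simp only [hef]
              rw [if_neg (by omega), if_neg (by omega), if_pos h3]
            rw [hei]
          · -- type 4
            have hrow : F q = fun y => Real.exp y * y ^ (-α) *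
                laguerre (-α) ((d ((i : ℕ) - s - r2 - r3) : ℕ) : ℤ) (-y) := by
              funext y
              simp only [hF, hqi]
              rw [if_neg (by omega), if_neg (by omega), if_neg (by omega),
                show (i : ℕ) + 1 - (s + 1) - r2 - r3 = (i : ℕ) - s - r2 - r3 from by omega]
            have hGrow : G i = fun y => Real.exp y * y ^ (-(α + 1)) *
                laguerre (-(α + 1)) ((d ((i : ℕ) - s - r2 - r3) + 1 : ℕ) : ℤ) (-y) := by
              funext y
              simp only [hG]
              rw [if_neg (by omega), if_neg (by omega), if_neg (by omega)]
            have heq : deriv (F q) =ᶠ[nhds x] fun y =>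
                ((d ((i : ℕ) - s - r2 - r3) : ℝ) + 1) *
                  (Real.exp y * y ^ (-(α + 1)) *
                    laguerre (-(α + 1)) ((d ((i : ℕ) - s - r2 - r3) + 1 : ℕ) : ℤ) (-y)) := by
              rw [hrow]
              filter_upwards [isOpen_Ioi.mem_nhds hx] with y hy
              rw [(hasDerivAt_type4 α _ hy).deriv,
                show ((d ((i : ℕ) - s - r2 - r3) : ℤ) + 1) =
                  ((d ((i : ℕ) - s - r2 - r3) + 1 : ℕ) : ℤ) from by omega]
            rw [iteratedDeriv_congr_nhds heq j, iteratedDeriv_const_mul'', hGrow]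
            have hei : ef (i : ℕ) = (d ((i : ℕ) - s - r2 - r3) : ℝ) + 1 := by
              simp only [hef]
              rw [if_neg (by omega), if_neg (by omega), if_neg (by omega)]
            rw [hei]
    rw [wr_step (fun i : Fin (r'' + 1) => F (Fin.cast hlen.symm i)) G
      (fun i : Fin r'' => ef (i : ℕ)) p x hFp hFG]
    have hprod : (∏ i : Fin r'', ef (i : ℕ)) =
        (-1 : ℝ) ^ s * ((∏ i ∈ Finset.range r3, ((c i : ℝ) - α)) *
          ∏ i ∈ Finset.range r4, ((d i : ℝ) + 1)) := by
      rw [Fin.prod_univ_eq_prod_range (fun v => ef v) r'']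
      rw [show r'' = s + r2 + r3 + r4 from rfl]
      rw [Finset.prod_range_add ef (s + r2 + r3) r4, Finset.prod_range_add ef (s + r2) r3,
        Finset.prod_range_add ef s r2]
      have hB1 : (∏ v ∈ Finset.range s, ef v) = (-1 : ℝ) ^ s := by
        have h : ∀ v ∈ Finset.range s, ef v = -1 := by
          intro v hv
          simp only [hef]
          rw [if_pos (Finset.mem_range.mp hv)]
        rw [Finset.prod_congr rfl h, Finset.prod_const, Finset.card_range]
      have hB2 : (∏ v ∈ Finset.range r2, ef (s + v)) = 1 := by
        apply Finset.prod_eq_one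
        intro v hv
        have hv' := Finset.mem_range.mp hv
        simp only [hef]
        rw [if_neg (by omega), if_pos (by omega)]
      have hB3 : (∏ v ∈ Finset.range r3, ef (s + r2 + v)) =
          ∏ v ∈ Finset.range r3, ((c v : ℝ) - α) := by
        refine Finset.prod_congr rfl fun v hv => ?_
        have hv' := Finset.mem_range.mp hv
        simp only [hef]
        rw [if_neg (by omega), if_neg (by omega), if_pos (by omega),
          show s + r2 + v - s - r2 = v from by omega]
      have hB4 : (∏ v ∈ Finset.range r4, ef (s + r2 + r3 + v)) =
          ∏ v ∈ Finset.range r4, ((d v : ℝ) + 1) := by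
        refine Finset.prod_congr rfl fun v hv => ?_
        have hv' := Finset.mem_range.mp hv
        simp only [hef]
        rw [if_neg (by omega), if_neg (by omega), if_neg (by omega),
          show s + r2 + r3 + v - s - r2 - r3 = v from by omega]
      rw [hB1, hB2, hB3, hB4]
      ring
    rw [hprod, hps]
    have hone : (-1 : ℝ) ^ s * (-1 : ℝ) ^ s = 1 := by
      rw [← pow_add, show s + s = 2 * s from by ring, pow_mul]
      norm_num
    calc (-1 : ℝ) ^ s * ((-1 : ℝ) ^ s * ((∏ i ∈ Finset.range r3, ((c i : ℝ) - α)) *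
          ∏ i ∈ Finset.range r4, ((d i : ℝ) + 1))) * Wr G x
        = ((-1 : ℝ) ^ s * (-1 : ℝ) ^ s) * (((∏ i ∈ Finset.range r3, ((c i : ℝ) - α)) *
          ∏ i ∈ Finset.range r4, ((d i : ℝ) + 1)) * Wr G x) := by ring
      _ = _ := by rw [hone]; ring
  rw [key]
  have hexp : α + 1 + (s : ℝ) + (r2 : ℝ) = α + ((s : ℕ) + 1 : ℕ) + (r2 : ℝ) := by push_cast; ring
  rw [hexp]
  ring
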